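/- For any graph G of order n that is not isomorphic to the 5-cycle C₅, L_{2,t}(G) + L_{2,t}(Ḡ) ≤ n + 4, where Ḡ denotes the complement of G. -/

import Mathlib

open SimpleGraph

/-- The closed neighborhood `N[v]` of a vertex. -/
def closedNbhd {V : Type*} (G : SimpleGraph V) (v : V) : Set V :=
  insert v (G.neighborSet v)

/-- `B` is a `k`-total limited packing: every open neighborhood contains at most `k`
vertices of `B`. -/
def IsTotalLimitedPacking {V : Type*} (G : SimpleGraph V) (k : ℕ) (B : Set V) : Prop :=
  ∀ v : V, (B ∩ G.neighborSet v).ncard ≤ k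

/-- The `2`-total limited packing number `L_{2,t}(G)`. -/
noncomputable def L2t {V : Type*} (G : SimpleGraph V) : ℕ :=
  sSup {n | ∃ B : Set V, IsTotalLimitedPacking G 2 B ∧ B.ncard = n}

section Aux
open Finset
set_option linter.unusedSectionVars false
variable {V : Type*} [Fintype V] [DecidableEq V]

lemma nbhd_eq {G : SimpleGraph V} [DecidableRel G.Adj] {v u w : V} (hdeg : G.degree v = 2)
    (huw : u ≠ w) (hu : G.Adj v u) (hw : G.Adj v w) : ∀ x, G.Adj v x ↔ x = u ∨ x = w := by
  have hsub : ({u, w} : Finset V) ⊆ G.neighborFinset v := by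
    intro x hx
    simp only [Finset.mem_insert, Finset.mem_singleton] at hx
    rcases hx with rfl | rfl <;> simpa [mem_neighborFinset]
  have hcard : (G.neighborFinset v).card ≤ ({u, w} : Finset V).card := by
    rw [card_neighborFinset_eq_degree, hdeg, Finset.card_insert_of_notMem (by simpa),
      Finset.card_singleton]
  have heq : G.neighborFinset v = {u, w} := (Finset.eq_of_subset_of_card_le hsub hcard).symm
  intro x
  rw [← mem_neighborFinset, heq]
  simp

lemma fresh {s : Finset V} (h : s.card < Fintype.card V) : ∃ x, x ∉ s := by
  by_contra h'
  push_neg at h'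
  have hle := Finset.card_le_card (fun x _ => h' x : (Finset.univ : Finset V) ⊆ s)
  simp only [Finset.card_univ] at hle
  omega

omit [Fintype V] in
lemma card4 {x a b c : V} (h1 : x ≠ a) (h2 : x ≠ b) (h3 : x ≠ c) (h4 : a ≠ b) (h5 : a ≠ c)
    (h6 : b ≠ c) : ({x, a, b, c} : Finset V).card = 4 := by
  rw [Finset.card_insert_of_notMem (by simp [h1, h2, h3]),
    Finset.card_insert_of_notMem (by simp [h4, h5]),
    Finset.card_insert_of_notMem (by simp [h6]), Finset.card_singleton]

lemma no_room {G : SimpleGraph V} [DecidableRel G.Adj] (h5 : Fintype.card V = 5)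
    {x : V} (hdegx : G.degree x = 2) {s : Finset V} (hcard : 4 ≤ s.card)
    (hsub : G.neighborFinset x ⊆ Finset.univ \ s) : False := by
  have hle := Finset.card_le_card hsub
  rw [card_neighborFinset_eq_degree, hdegx, Finset.card_sdiff_of_subset (Finset.subset_univ s),
    Finset.card_univ, h5] at hle
  omega

lemma two_regular_iso (G : SimpleGraph V) [DecidableRel G.Adj] (h5 : Fintype.card V = 5)
    (hdeg : ∀ v, G.degree v = 2) : Nonempty (G ≃g cycleGraph 5) := by
  have hne : Nonempty V := Fintype.card_pos_iff.mp (by omega)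
  obtain ⟨a⟩ := hne
  obtain ⟨b, e, hbe, hNa⟩ : ∃ b e, b ≠ e ∧ G.neighborFinset a = {b, e} :=
    Finset.card_eq_two.mp (by rw [card_neighborFinset_eq_degree, hdeg])
  have hab : G.Adj a b := by rw [← mem_neighborFinset, hNa]; simp
  have hae : G.Adj a e := by rw [← mem_neighborFinset, hNa]; simp
  have Na : ∀ x, G.Adj a x ↔ x = b ∨ x = e := nbhd_eq (hdeg a) hbe hab hae
  have hba : b ≠ a := hab.ne'
  have hea : e ≠ a := hae.ne'
  -- b's other neighbor c
  obtain ⟨u, w, huw, hNb'⟩ : ∃ u w, u ≠ w ∧ G.neighborFinset b = {u, w} :=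
    Finset.card_eq_two.mp (by rw [card_neighborFinset_eq_degree, hdeg])
  have haN : a ∈ G.neighborFinset b := by rw [mem_neighborFinset]; exact hab.symm
  rw [hNb'] at haN
  simp only [Finset.mem_insert, Finset.mem_singleton] at haN
  obtain ⟨c, hca, hbc⟩ : ∃ c, c ≠ a ∧ G.Adj b c := by
    rcases haN with rfl | rfl
    · exact ⟨w, huw.symm, by rw [← mem_neighborFinset, hNb']; simp⟩
    · exact ⟨u, huw, by rw [← mem_neighborFinset, hNb']; simp⟩
  have Nb : ∀ x, G.Adj b x ↔ x = a ∨ x = c := nbhd_eq (hdeg b) (Ne.symm hca) hab.symm hbc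
  have hcb : c ≠ b := fun h => G.irrefl (h ▸ hbc)
  have hce : c ≠ e := by
    rintro rfl
    -- triangle a b c
    have Nc : ∀ x, G.Adj c x ↔ x = a ∨ x = b := nbhd_eq (hdeg c) hab.ne hae.symm hbc.symm
    obtain ⟨x, hx⟩ := fresh (s := ({a, b, c} : Finset V)) (by
      have t1 := Finset.card_insert_le a ({b, c} : Finset V)
      have t2 := Finset.card_insert_le b ({c} : Finset V)
      have t3 : ({c} : Finset V).card = 1 := Finset.card_singleton _
      omega)
    simp only [Finset.mem_insert, Finset.mem_singleton, not_or] at hx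
    obtain ⟨hxa, hxb, hxc⟩ := hx
    refine no_room h5 (hdeg x) (s := {x, a, b, c})
      (by rw [card4 hxa hxb hxc hab.ne hae.ne hbe]) ?_
    intro y hy
    rw [mem_neighborFinset] at hy
    simp only [Finset.mem_sdiff, Finset.mem_univ, true_and, Finset.mem_insert,
      Finset.mem_singleton, not_or]
    refine ⟨fun h => G.irrefl (h ▸ hy), ?_, ?_, ?_⟩
    · rintro rfl; rcases (Na x).mp hy.symm with rfl | rfl <;> simp_all
    · rintro rfl; rcases (Nb x).mp hy.symm with rfl | rfl <;> simp_all
    · rintro rfl; rcases (Nc x).mp hy.symm with rfl | rfl <;> simp_all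
  -- c's other neighbor d
  obtain ⟨u', w', huw', hNc'⟩ : ∃ u w, u ≠ w ∧ G.neighborFinset c = {u, w} :=
    Finset.card_eq_two.mp (by rw [card_neighborFinset_eq_degree, hdeg])
  have hbN : b ∈ G.neighborFinset c := by rw [mem_neighborFinset]; exact hbc.symm
  rw [hNc'] at hbN
  simp only [Finset.mem_insert, Finset.mem_singleton] at hbN
  obtain ⟨d, hdb, hcd⟩ : ∃ d, d ≠ b ∧ G.Adj c d := by
    rcases hbN with rfl | rfl
    · exact ⟨w', huw'.symm, by rw [← mem_neighborFinset, hNc']; simp⟩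
    · exact ⟨u', huw', by rw [← mem_neighborFinset, hNc']; simp⟩
  have Nc : ∀ x, G.Adj c x ↔ x = b ∨ x = d := nbhd_eq (hdeg c) (Ne.symm hdb) hbc.symm hcd
  have hdc : d ≠ c := fun h => G.irrefl (h ▸ hcd)
  have hda : d ≠ a := by
    rintro rfl
    rcases (Na c).mp hcd.symm with rfl | rfl
    · exact hcb rfl
    · exact hce rfl
  have hde : d ≠ e := by
    rintro rfl
    -- 4-cycle a b c d
    have Nd : ∀ x, G.Adj d x ↔ x = a ∨ x = c :=
      nbhd_eq (hdeg d) (Ne.symm hca) hae.symm hcd.symm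
    obtain ⟨x, hx⟩ := fresh (s := ({a, b, c, d} : Finset V)) (by
      have t1 := Finset.card_insert_le a ({b, c, d} : Finset V)
      have t2 := Finset.card_insert_le b ({c, d} : Finset V)
      have t3 := Finset.card_insert_le c ({d} : Finset V)
      have t4 : ({d} : Finset V).card = 1 := Finset.card_singleton _
      omega)
    simp only [Finset.mem_insert, Finset.mem_singleton, not_or] at hx
    obtain ⟨hxa, hxb, hxc, hxd⟩ := hx
    refine no_room h5 (hdeg x) (s := {x, a, b, c})
      (by rw [card4 hxa hxb hxc hab.ne (Ne.symm hca) (Ne.symm hcb)]) ?_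
    intro y hy
    rw [mem_neighborFinset] at hy
    simp only [Finset.mem_sdiff, Finset.mem_univ, true_and, Finset.mem_insert,
      Finset.mem_singleton, not_or]
    refine ⟨fun h => G.irrefl (h ▸ hy), ?_, ?_, ?_⟩
    · rintro rfl; rcases (Na x).mp hy.symm with rfl | rfl <;> simp_all
    · rintro rfl; rcases (Nb x).mp hy.symm with rfl | rfl <;> simp_all
    · rintro rfl; rcases (Nc x).mp hy.symm with rfl | rfl <;> simp_all
  -- all five vertices
  have hall : ∀ x : V, x = a ∨ x = b ∨ x = c ∨ x = d ∨ x = e := by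
    intro x
    by_contra hx
    push_neg at hx
    obtain ⟨hxa, hxb, hxc, hxd, hxe⟩ := hx
    have hlt : ({x, a, b, c, d, e} : Finset V).card ≤ Fintype.card V :=
      (Finset.card_le_card (Finset.subset_univ _)).trans_eq Finset.card_univ
    have h6 : ({x, a, b, c, d, e} : Finset V).card = 6 := by
      rw [Finset.card_insert_of_notMem (by simp [hxa, hxb, hxc, hxd, hxe]),
        Finset.card_insert_of_notMem (by simp [hab.ne, Ne.symm hca, Ne.symm hda, hae.ne]),
        card4 (Ne.symm hcb) (Ne.symm hdb) hbe (Ne.symm hdc) hce hde]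
    omega
  -- d's other neighbor is e
  obtain ⟨u'', w'', huw'', hNd'⟩ : ∃ u w, u ≠ w ∧ G.neighborFinset d = {u, w} :=
    Finset.card_eq_two.mp (by rw [card_neighborFinset_eq_degree, hdeg])
  have hcN : c ∈ G.neighborFinset d := by rw [mem_neighborFinset]; exact hcd.symm
  rw [hNd'] at hcN
  simp only [Finset.mem_insert, Finset.mem_singleton] at hcN
  obtain ⟨y, hyc, hdy⟩ : ∃ y, y ≠ c ∧ G.Adj d y := by
    rcases hcN with rfl | rfl
    · exact ⟨w'', huw''.symm, by rw [← mem_neighborFinset, hNd']; simp⟩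
    · exact ⟨u'', huw'', by rw [← mem_neighborFinset, hNd']; simp⟩
  have hde' : G.Adj d e := by
    rcases hall y with h | h | h | h | h
    · exfalso
      have hADa : G.Adj a d := by rw [h] at hdy; exact hdy.symm
      rcases (Na d).mp hADa with h' | h'
      · exact hdb h'
      · exact hde h'
    · exfalso
      have hADb : G.Adj b d := by rw [h] at hdy; exact hdy.symm
      rcases (Nb d).mp hADb with h' | h'
      · exact hda h'
      · exact hdc h'
    · exact absurd h hyc
    · exfalso; rw [h] at hdy; exact G.irrefl hdy
    · rw [h] at hdy; exact hdy
  have Nd : ∀ x, G.Adj d x ↔ x = c ∨ x = e := nbhd_eq (hdeg d) hce hcd.symm hde'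
  have Ne' : ∀ x, G.Adj e x ↔ x = a ∨ x = d := nbhd_eq (hdeg e) hda.symm hae.symm hde'.symm
  -- build the iso
  set f : Fin 5 → V := ![a, b, c, d, e] with hf
  have hinj : Function.Injective f := by
    intro i j hij
    fin_cases i <;> fin_cases j <;>
      first
      | rfl
      | (exfalso; revert hij;
         simp [hf, hab.ne, hba, hca, hda, hea, hbe, hcb, hce, hdb, hdc, hde, hae.ne,
           Ne.symm hbe, Ne.symm hcb, Ne.symm hce, Ne.symm hdb, Ne.symm hdc, Ne.symm hde,
           Ne.symm hca, Ne.symm hda])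
  have hbij : Function.Bijective f :=
    (Fintype.bijective_iff_injective_and_card f).mpr ⟨hinj, by simp [h5]⟩
  refine ⟨(RelIso.mk (Equiv.ofBijective f hbij) ?_).symm⟩
  intro i j
  show G.Adj (f i) (f j) ↔ (cycleGraph 5).Adj i j
  fin_cases i <;> fin_cases j <;>
    simp [hf, Na, Nb, Nc, Nd, Ne', cycleGraph_adj, hbe, hcb, hce, hdb, hdc, hde,
      Ne.symm hbe, Ne.symm hcb, Ne.symm hce, Ne.symm hdb, Ne.symm hdc, Ne.symm hde,
      hca, hda, hea, hba, hab.ne, hae.ne, Ne.symm hca, Ne.symm hda] <;>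
    decide

lemma ncard_eq_degree (G : SimpleGraph V) (v : V) [Fintype (G.neighborSet v)] :
    (G.neighborSet v).ncard = G.degree v := by
  rw [← Nat.card_coe_set_eq, Nat.card_eq_fintype_card,
    SimpleGraph.card_neighborSet_eq_degree]

lemma final_step (G : SimpleGraph V) (hcard5 : Fintype.card V = 5)
    (hG : ∀ v, (G.neighborSet v).ncard ≤ 2) (hGc : ∀ v, (Gᶜ.neighborSet v).ncard ≤ 2) :
    Nonempty (G ≃g cycleGraph 5) := by
  classical
  haveI : DecidableEq V := Classical.decEq V
  haveI : DecidableRel G.Adj := Classical.decRel _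
  apply two_regular_iso G hcard5
  intro v
  have h1 := hG v
  have h2 := hGc v
  rw [ncard_eq_degree] at h1 h2
  have hc := SimpleGraph.degree_compl (G := G) (v := v)
  rw [hcard5] at hc
  omega


variable {V : Type*} [Fintype V]

lemma L2t_exists (G : SimpleGraph V) :
    ∃ B : Set V, IsTotalLimitedPacking G 2 B ∧ B.ncard = L2t G := by
  have h0 : (0 : ℕ) ∈ {n | ∃ B : Set V, IsTotalLimitedPacking G 2 B ∧ B.ncard = n} :=
    ⟨∅, fun v => by simp [Set.empty_inter], Set.ncard_empty _⟩
  have hbdd : BddAbove {n | ∃ B : Set V, IsTotalLimitedPacking G 2 B ∧ B.ncard = n} := by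
    refine ⟨Fintype.card V, ?_⟩
    rintro n ⟨B, -, rfl⟩
    calc B.ncard ≤ (Set.univ : Set V).ncard :=
          Set.ncard_le_ncard (Set.subset_univ B) Set.finite_univ
      _ = Fintype.card V := by rw [Set.ncard_univ, Nat.card_eq_fintype_card]
  exact Nat.sSup_mem ⟨0, h0⟩ hbdd

end Aux

/-- For any graph `G` of order `n` not isomorphic to the `5`-cycle,
`L_{2,t}(G) + L_{2,t}(Ġ) ≤ n + 4`. -/
theorem L2t_nordhaus_gaddum_strict {V : Type*} [Fintype V] (G : SimpleGraph V)
    (hC5 : ¬ Nonempty (G ≃g SimpleGraph.cycleGraph 5)) :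
    L2t G + L2t Gᶜ ≤ Fintype.card V + 4 := by
  classical
  obtain ⟨B₁, h1, hc1⟩ := L2t_exists G
  obtain ⟨B₂, h2, hc2⟩ := L2t_exists Gᶜ
  rw [← hc1, ← hc2]
  have hsum : B₁.ncard + B₂.ncard = (B₁ ∪ B₂).ncard + (B₁ ∩ B₂).ncard :=
    (Set.ncard_union_add_ncard_inter B₁ B₂ (Set.toFinite _) (Set.toFinite _)).symm
  have hU : (B₁ ∪ B₂).ncard ≤ Fintype.card V := by
    calc (B₁ ∪ B₂).ncard ≤ (Set.univ : Set V).ncard :=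
          Set.ncard_le_ncard (Set.subset_univ _) Set.finite_univ
      _ = Fintype.card V := by rw [Set.ncard_univ, Nat.card_eq_fintype_card]
  have key : ∀ v : V, ((B₁ ∩ B₂) \ {v}).ncard ≤ 4 := by
    intro v
    have hsub : (B₁ ∩ B₂) \ {v} ⊆ (B₁ ∩ G.neighborSet v) ∪ (B₂ ∩ Gᶜ.neighborSet v) := by
      rintro u ⟨⟨hu1, hu2⟩, huv⟩
      simp only [Set.mem_singleton_iff] at huv
      by_cases h : G.Adj v u
      · exact Or.inl ⟨hu1, h⟩
      · exact Or.inr ⟨hu2, (SimpleGraph.compl_adj G v u).mpr ⟨fun hh => huv hh.symm, h⟩⟩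
    calc ((B₁ ∩ B₂) \ {v}).ncard
        ≤ ((B₁ ∩ G.neighborSet v) ∪ (B₂ ∩ Gᶜ.neighborSet v)).ncard :=
          Set.ncard_le_ncard hsub (Set.toFinite _)
      _ ≤ (B₁ ∩ G.neighborSet v).ncard + (B₂ ∩ Gᶜ.neighborSet v).ncard :=
          Set.ncard_union_le _ _
      _ ≤ 4 := by have := h1 v; have := h2 v; omega
  by_cases hle : (B₁ ∩ B₂).ncard ≤ 4
  · omega
  exfalso
  push_neg at hle
  obtain ⟨v0, hv0⟩ : (B₁ ∩ B₂).Nonempty := Set.nonempty_of_ncard_ne_zero (by omega)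
  have hdiff : ((B₁ ∩ B₂) \ {v0}).ncard = (B₁ ∩ B₂).ncard - 1 :=
    Set.ncard_diff_singleton_of_mem hv0
  have h5c : (B₁ ∩ B₂).ncard = 5 := by have := key v0; omega
  have hallmem : ∀ v, v ∈ B₁ ∩ B₂ := by
    intro v; by_contra hv
    have heq : (B₁ ∩ B₂) \ {v} = B₁ ∩ B₂ := Set.diff_singleton_eq_self hv
    have := key v
    rw [heq, h5c] at this
    omega
  have hBuniv : B₁ ∩ B₂ = Set.univ := Set.eq_univ_of_forall hallmem
  have hcard5 : Fintype.card V = 5 := by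
    rw [hBuniv, Set.ncard_univ, Nat.card_eq_fintype_card] at h5c
    exact h5c
  have hB1 : B₁ = Set.univ := Set.eq_univ_of_univ_subset (hBuniv ▸ Set.inter_subset_left)
  have hB2 : B₂ = Set.univ := Set.eq_univ_of_univ_subset (hBuniv ▸ Set.inter_subset_right)
  have hdegG : ∀ v, (G.neighborSet v).ncard ≤ 2 := by
    intro v
    have := h1 v
    rwa [hB1, Set.univ_inter] at this
  have hdegGc : ∀ v, (Gᶜ.neighborSet v).ncard ≤ 2 := by
    intro v
    have := h2 v
    rwa [hB2, Set.univ_inter] at this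
  exact hC5 (final_step G hcard5 hdegG hdegGc)
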